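/- Let τ₀ : ℝ² → (0,∞) and Q₀ : ℝ² → ℂ_I be smooth. Then: (i) the map w ↦ (1/2)(1+iI)·w is an ℝ-linear bijection from W onto L; (ii) if v : ℝ² → W is smooth and satisfies the v-system ∂_z v = (∂_z(log √τ₀))·v + (i·Q₀/√τ₀)·J·v, ∂_z̄ v = (i·√τ₀/4)·J·v, then g := (1/2)(1+iI)·v : ℝ² → L satisfies the g-system ∂_z g = (∂_z(log √τ₀))·g + (Q₀/√τ₀)·J·ĝ·I, ∂_z̄ g = (√τ₀/4)·J·ĝ·I; (iii) conversely, if g : ℝ² → L is smooth and satisfies the g-system, then the unique smooth map v : ℝ² → W with g = (1/2)(1+iI)·v satisfies the v-system. (This is the algebraic correspondence between the spinor equations of H = 1/2 surfaces in ℝ^{1,2} and in ℍ²×ℝ.) -/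

import Mathlib

/-!
`ℍ^ℂ` is modelled as `Quaternion ℂ` (complex coefficients on `1, I, J, K`, central complex
unit `i = Complex.I`, `I² = J² = K² = −1`, `I*J = K = −J*I`).  Maps on `ℝ²` are taken on
`ℝ × ℝ`; smoothness and the partial derivatives `∂ₓ`, `∂_y` are meant coefficientwise, and
`qdz f = (1/2)(∂ₓ f − I·∂_y f)`, `qdzbar f = (1/2)(∂ₓ f + I·∂_y f)` (left multiplication
by the quaternion `I`).  `cI` embeds `ℂ` as `ℂ_I = ℝ·1 ⊕ ℝ·I ⊂ ℍ^ℂ`.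
-/

noncomputable section

/-- The quaternion `I`. -/
def Iq : Quaternion ℂ := ⟨0, 1, 0, 0⟩

/-- The quaternion `J`. -/
def Jq : Quaternion ℂ := ⟨0, 0, 1, 0⟩

/-- Coefficientwise complex conjugation `â` on the complex quaternions. -/
def qhat (a : Quaternion ℂ) : Quaternion ℂ :=
  ⟨starRingEnd ℂ a.re, starRingEnd ℂ a.imI, starRingEnd ℂ a.imJ, starRingEnd ℂ a.imK⟩

/-- The embedding of `ℂ` onto `ℂ_I = ℝ·1 ⊕ ℝ·I ⊂ ℍ^ℂ`, sending the complex unit to `I`. -/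
def cI (w : ℂ) : Quaternion ℂ := ⟨((w.re : ℝ) : ℂ), ((w.im : ℝ) : ℂ), 0, 0⟩

/-- The coefficientwise directional derivative of an `ℍ^ℂ`-valued map on `ℝ²`. -/
def qpd (v : ℝ × ℝ) (f : ℝ × ℝ → Quaternion ℂ) (p : ℝ × ℝ) : Quaternion ℂ :=
  ⟨fderiv ℝ (fun s => (f s).re) p v, fderiv ℝ (fun s => (f s).imI) p v,
   fderiv ℝ (fun s => (f s).imJ) p v, fderiv ℝ (fun s => (f s).imK) p v⟩

/-- `∂_z f := (1/2)(∂ₓ f − I·∂_y f)`, with `I·` the left multiplication by `I` in `ℍ^ℂ`. -/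
def qdz (f : ℝ × ℝ → Quaternion ℂ) (p : ℝ × ℝ) : Quaternion ℂ :=
  (2 : ℂ)⁻¹ • (qpd (1, 0) f p - Iq * qpd (0, 1) f p)

/-- `∂_z̄ f := (1/2)(∂ₓ f + I·∂_y f)`. -/
def qdzbar (f : ℝ × ℝ → Quaternion ℂ) (p : ℝ × ℝ) : Quaternion ℂ :=
  (2 : ℂ)⁻¹ • (qpd (1, 0) f p + Iq * qpd (0, 1) f p)

/-- Smoothness (coefficientwise) of an `ℍ^ℂ`-valued map on `ℝ²`. -/
def QSmooth (f : ℝ × ℝ → Quaternion ℂ) : Prop :=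
  ContDiff ℝ (⊤ : ℕ∞) (fun p => (f p).re) ∧ ContDiff ℝ (⊤ : ℕ∞) (fun p => (f p).imI) ∧
  ContDiff ℝ (⊤ : ℕ∞) (fun p => (f p).imJ) ∧ ContDiff ℝ (⊤ : ℕ∞) (fun p => (f p).imK)

/-- The real-valued function `r`, regarded as `ℂ_I`-valued (i.e. `ℍ^ℂ`-valued). -/
def rQ (r : ℝ) : Quaternion ℂ := ⟨((r : ℝ) : ℂ), 0, 0, 0⟩

/-- `L := {(1/2)(1+iI)(a+bJ) : a, b ∈ ℂ} ⊂ ℍ^ℂ`. -/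
def Lset : Set (Quaternion ℂ) :=
  {g | ∃ a b : ℂ, g = (2 : ℂ)⁻¹ •
    ((⟨1, Complex.I, 0, 0⟩ : Quaternion ℂ) * (⟨a, 0, b, 0⟩ : Quaternion ℂ))}

/-- For `g = (1/2)(1+iI)(a+bJ) ∈ L` (so that `a = 2·g.re`, `b = 2·g.imJ`), the squared norm
`|g|² := |a|² − |b|²`. -/
def LnormSq (g : Quaternion ℂ) : ℝ :=
  Complex.normSq (2 * g.re) - Complex.normSq (2 * g.imJ)

/-- The `g`-system: `∂_z g = (∂_z log √τ₀)·g + (Q₀/√τ₀)·J·ĝ·I` and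
`∂_z̄ g = (√τ₀/4)·J·ĝ·I`, with the `ℂ_I`-valued Weierstrass data `(Q₀, τ₀)`. -/
def GSystem (τ₀ : ℝ × ℝ → ℝ) (Q₀ : ℝ × ℝ → ℂ) (g : ℝ × ℝ → Quaternion ℂ) : Prop :=
  ∀ p : ℝ × ℝ,
    qdz g p = qdz (fun s => rQ (Real.log (Real.sqrt (τ₀ s)))) p * g p
        + (Real.sqrt (τ₀ p))⁻¹ • (cI (Q₀ p) * (Jq * qhat (g p) * Iq)) ∧
    qdzbar g p = (Real.sqrt (τ₀ p) / 4) • (Jq * qhat (g p) * Iq)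

/-- `W := {α₀·1 + α₁I + iα₂J + iα₃K : α₀,…,α₃ ∈ ℝ} ⊂ ℍ^ℂ`. -/
def Wset : Set (Quaternion ℂ) :=
  {v | ∃ α₀ α₁ α₂ α₃ : ℝ,
    v = ⟨((α₀ : ℝ) : ℂ), ((α₁ : ℝ) : ℂ), Complex.I * (α₂ : ℂ), Complex.I * (α₃ : ℂ)⟩}

/-- The complex quaternion `1 + iI`. -/
def onePiI : Quaternion ℂ := ⟨1, Complex.I, 0, 0⟩

/-- The map `w ↦ (1/2)(1+iI)·w`. -/
def ψL (w : Quaternion ℂ) : Quaternion ℂ :=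
  (2 : ℂ)⁻¹ • (onePiI * w)

/-- The `v`-system: `∂_z v = (∂_z log √τ₀)·v + (i·Q₀/√τ₀)·J·v` and
`∂_z̄ v = (i·√τ₀/4)·J·v` (the spinor equation of `H = 1/2` surfaces in `ℝ^{1,2}`). -/
def VSystem (τ₀ : ℝ × ℝ → ℝ) (Q₀ : ℝ × ℝ → ℂ) (v : ℝ × ℝ → Quaternion ℂ) : Prop :=
  ∀ p : ℝ × ℝ,
    qdz v p = qdz (fun s => rQ (Real.log (Real.sqrt (τ₀ s)))) p * v p
        + (Real.sqrt (τ₀ p))⁻¹ • (Complex.I • (cI (Q₀ p) * (Jq * v p))) ∧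
    qdzbar v p = (Real.sqrt (τ₀ p) / 4) • (Complex.I • (Jq * v p))


/-! ### Auxiliary lemmas -/

section Aux

@[simp] lemma qmk_mul_re (a0 a1 a2 a3 : ℂ) (b : Quaternion ℂ) :
    (@HMul.hMul (Quaternion ℂ) (Quaternion ℂ) (Quaternion ℂ) _ (⟨a0, a1, a2, a3⟩ : QuaternionAlgebra ℂ (-1) 0 (-1)) b).re = a0*b.re - a1*b.imI - a2*b.imJ - a3*b.imK :=
  Quaternion.re_mul _ _

@[simp] lemma q_mul_mk_re (a : Quaternion ℂ) (b0 b1 b2 b3 : ℂ) :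
    (@HMul.hMul (Quaternion ℂ) (Quaternion ℂ) (Quaternion ℂ) _ a (⟨b0, b1, b2, b3⟩ : QuaternionAlgebra ℂ (-1) 0 (-1))).re = a.re*b0 - a.imI*b1 - a.imJ*b2 - a.imK*b3 :=
  Quaternion.re_mul _ _

@[simp] lemma qmk_mul_mk_re (a0 a1 a2 a3 b0 b1 b2 b3 : ℂ) :
    (@HMul.hMul (Quaternion ℂ) (Quaternion ℂ) (Quaternion ℂ) _ (⟨a0, a1, a2, a3⟩ : QuaternionAlgebra ℂ (-1) 0 (-1))
      (⟨b0, b1, b2, b3⟩ : QuaternionAlgebra ℂ (-1) 0 (-1))).re = a0*b0 - a1*b1 - a2*b2 - a3*b3 :=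
  Quaternion.re_mul _ _

@[simp] lemma qmk_mul_imI (a0 a1 a2 a3 : ℂ) (b : Quaternion ℂ) :
    (@HMul.hMul (Quaternion ℂ) (Quaternion ℂ) (Quaternion ℂ) _ (⟨a0, a1, a2, a3⟩ : QuaternionAlgebra ℂ (-1) 0 (-1)) b).imI = a0*b.imI + a1*b.re + a2*b.imK - a3*b.imJ :=
  Quaternion.imI_mul _ _

@[simp] lemma q_mul_mk_imI (a : Quaternion ℂ) (b0 b1 b2 b3 : ℂ) :
    (@HMul.hMul (Quaternion ℂ) (Quaternion ℂ) (Quaternion ℂ) _ a (⟨b0, b1, b2, b3⟩ : QuaternionAlgebra ℂ (-1) 0 (-1))).imI = a.re*b1 + a.imI*b0 + a.imJ*b3 - a.imK*b2 :=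
  Quaternion.imI_mul _ _

@[simp] lemma qmk_mul_mk_imI (a0 a1 a2 a3 b0 b1 b2 b3 : ℂ) :
    (@HMul.hMul (Quaternion ℂ) (Quaternion ℂ) (Quaternion ℂ) _ (⟨a0, a1, a2, a3⟩ : QuaternionAlgebra ℂ (-1) 0 (-1))
      (⟨b0, b1, b2, b3⟩ : QuaternionAlgebra ℂ (-1) 0 (-1))).imI = a0*b1 + a1*b0 + a2*b3 - a3*b2 :=
  Quaternion.imI_mul _ _

@[simp] lemma qmk_mul_imJ (a0 a1 a2 a3 : ℂ) (b : Quaternion ℂ) :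
    (@HMul.hMul (Quaternion ℂ) (Quaternion ℂ) (Quaternion ℂ) _ (⟨a0, a1, a2, a3⟩ : QuaternionAlgebra ℂ (-1) 0 (-1)) b).imJ = a0*b.imJ - a1*b.imK + a2*b.re + a3*b.imI :=
  Quaternion.imJ_mul _ _

@[simp] lemma q_mul_mk_imJ (a : Quaternion ℂ) (b0 b1 b2 b3 : ℂ) :
    (@HMul.hMul (Quaternion ℂ) (Quaternion ℂ) (Quaternion ℂ) _ a (⟨b0, b1, b2, b3⟩ : QuaternionAlgebra ℂ (-1) 0 (-1))).imJ = a.re*b2 - a.imI*b3 + a.imJ*b0 + a.imK*b1 :=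
  Quaternion.imJ_mul _ _

@[simp] lemma qmk_mul_mk_imJ (a0 a1 a2 a3 b0 b1 b2 b3 : ℂ) :
    (@HMul.hMul (Quaternion ℂ) (Quaternion ℂ) (Quaternion ℂ) _ (⟨a0, a1, a2, a3⟩ : QuaternionAlgebra ℂ (-1) 0 (-1))
      (⟨b0, b1, b2, b3⟩ : QuaternionAlgebra ℂ (-1) 0 (-1))).imJ = a0*b2 - a1*b3 + a2*b0 + a3*b1 :=
  Quaternion.imJ_mul _ _

@[simp] lemma qmk_mul_imK (a0 a1 a2 a3 : ℂ) (b : Quaternion ℂ) :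
    (@HMul.hMul (Quaternion ℂ) (Quaternion ℂ) (Quaternion ℂ) _ (⟨a0, a1, a2, a3⟩ : QuaternionAlgebra ℂ (-1) 0 (-1)) b).imK = a0*b.imK + a1*b.imJ - a2*b.imI + a3*b.re :=
  Quaternion.imK_mul _ _

@[simp] lemma q_mul_mk_imK (a : Quaternion ℂ) (b0 b1 b2 b3 : ℂ) :
    (@HMul.hMul (Quaternion ℂ) (Quaternion ℂ) (Quaternion ℂ) _ a (⟨b0, b1, b2, b3⟩ : QuaternionAlgebra ℂ (-1) 0 (-1))).imK = a.re*b3 + a.imI*b2 - a.imJ*b1 + a.imK*b0 :=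
  Quaternion.imK_mul _ _

@[simp] lemma qmk_mul_mk_imK (a0 a1 a2 a3 b0 b1 b2 b3 : ℂ) :
    (@HMul.hMul (Quaternion ℂ) (Quaternion ℂ) (Quaternion ℂ) _ (⟨a0, a1, a2, a3⟩ : QuaternionAlgebra ℂ (-1) 0 (-1))
      (⟨b0, b1, b2, b3⟩ : QuaternionAlgebra ℂ (-1) 0 (-1))).imK = a0*b3 + a1*b2 - a2*b1 + a3*b0 :=
  Quaternion.imK_mul _ _

@[simp] lemma qmk_sub_re (a0 a1 a2 a3 : ℂ) (b : Quaternion ℂ) :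
    (@HSub.hSub (Quaternion ℂ) (Quaternion ℂ) (Quaternion ℂ) _
      (⟨a0, a1, a2, a3⟩ : QuaternionAlgebra ℂ (-1) 0 (-1)) b).re = a0 - b.re :=
  rfl

@[simp] lemma qmk_sub_imI (a0 a1 a2 a3 : ℂ) (b : Quaternion ℂ) :
    (@HSub.hSub (Quaternion ℂ) (Quaternion ℂ) (Quaternion ℂ) _
      (⟨a0, a1, a2, a3⟩ : QuaternionAlgebra ℂ (-1) 0 (-1)) b).imI = a1 - b.imI :=
  rfl

@[simp] lemma qmk_sub_imJ (a0 a1 a2 a3 : ℂ) (b : Quaternion ℂ) :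
    (@HSub.hSub (Quaternion ℂ) (Quaternion ℂ) (Quaternion ℂ) _
      (⟨a0, a1, a2, a3⟩ : QuaternionAlgebra ℂ (-1) 0 (-1)) b).imJ = a2 - b.imJ :=
  rfl

@[simp] lemma qmk_sub_imK (a0 a1 a2 a3 : ℂ) (b : Quaternion ℂ) :
    (@HSub.hSub (Quaternion ℂ) (Quaternion ℂ) (Quaternion ℂ) _
      (⟨a0, a1, a2, a3⟩ : QuaternionAlgebra ℂ (-1) 0 (-1)) b).imK = a3 - b.imK :=
  rfl

lemma Wmem_iff (w : Quaternion ℂ) :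
    w ∈ Wset ↔ w.re.im = 0 ∧ w.imI.im = 0 ∧ w.imJ.re = 0 ∧ w.imK.re = 0 := by
  constructor
  · rintro ⟨a,b,c,d,rfl⟩; simp [Complex.ext_iff]
  · rintro ⟨h1,h2,h3,h4⟩
    exact ⟨w.re.re, w.imI.re, w.imJ.im, w.imK.im, by
      apply QuaternionAlgebra.ext <;> simp [Complex.ext_iff, h1,h2,h3,h4]⟩

/-- The inverse map `L → W`. -/
def χ (g : Quaternion ℂ) : Quaternion ℂ :=
  ⟨((2*g.re.re : ℝ) : ℂ), ((-(2*g.re.im) : ℝ) : ℂ),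
   Complex.I * ((2*g.imJ.im : ℝ):ℂ), Complex.I * ((2*g.imJ.re : ℝ):ℂ)⟩

lemma chi_mem_W (g : Quaternion ℂ) : χ g ∈ Wset := by
  rw [Wmem_iff]; simp [χ]

lemma chi_psiL {w : Quaternion ℂ} (hw : w ∈ Wset) : χ (ψL w) = w := by
  rw [Wmem_iff] at hw
  obtain ⟨h1,h2,h3,h4⟩ := hw
  apply QuaternionAlgebra.ext <;>
    simp [χ, ψL, onePiI, Quaternion.re_mul, Quaternion.imI_mul, Quaternion.imJ_mul,
      Quaternion.imK_mul, Complex.ext_iff, h1,h2,h3,h4]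

lemma psiL_chi {g : Quaternion ℂ} (hg : g ∈ Lset) : ψL (χ g) = g := by
  obtain ⟨a,b,rfl⟩ := hg
  apply QuaternionAlgebra.ext <;>
    simp [χ, ψL, onePiI, Quaternion.re_mul, Quaternion.imI_mul, Quaternion.imJ_mul,
      Quaternion.imK_mul, Complex.ext_iff]

lemma psiL_mem_L {w : Quaternion ℂ} (hw : w ∈ Wset) : ψL w ∈ Lset := by
  obtain ⟨a,b,c,d,rfl⟩ := hw
  refine ⟨(a:ℂ) - Complex.I*(b:ℂ), (d:ℂ) + Complex.I*(c:ℂ), ?_⟩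
  apply QuaternionAlgebra.ext <;>
    simp [ψL, onePiI, Quaternion.re_mul, Quaternion.imI_mul, Quaternion.imJ_mul,
      Quaternion.imK_mul, Complex.ext_iff]

lemma psiL_add (w w' : Quaternion ℂ) : ψL (w + w') = ψL w + ψL w' := by
  simp [ψL, mul_add, smul_add]

lemma psiL_csmul (c : ℂ) (w : Quaternion ℂ) : ψL (c • w) = c • ψL w := by
  apply QuaternionAlgebra.ext <;>
    simp [ψL, onePiI, Quaternion.re_mul, Quaternion.imI_mul, Quaternion.imJ_mul,
      Quaternion.imK_mul] <;> ring

lemma psiL_rsmul (c : ℝ) (w : Quaternion ℂ) : ψL (c • w) = c • ψL w := by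
  apply QuaternionAlgebra.ext <;>
    simp [ψL, onePiI, Quaternion.re_mul, Quaternion.imI_mul, Quaternion.imJ_mul,
      Quaternion.imK_mul] <;> ring

lemma psiL_sub (w w' : Quaternion ℂ) : ψL (w - w') = ψL w - ψL w' := by
  simp [ψL, mul_sub, smul_sub]

lemma mul_csmul_comm (a : ℂ) (x y : Quaternion ℂ) : x * (a • y) = a • (x * y) := by
  apply QuaternionAlgebra.ext <;>
    simp [Quaternion.re_mul, Quaternion.imI_mul, Quaternion.imJ_mul,
      Quaternion.imK_mul] <;> ring

lemma comm_psiL (d w : Quaternion ℂ) (h3 : d.imJ = 0) (h4 : d.imK = 0) :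
    d * ψL w = ψL (d * w) := by
  apply QuaternionAlgebra.ext <;>
    simp [ψL, onePiI, Quaternion.re_mul, Quaternion.imI_mul, Quaternion.imJ_mul,
      Quaternion.imK_mul, h3, h4] <;> ring

lemma key_identity (α₀ α₁ α₂ α₃ : ℝ) :
    Jq * qhat (ψL ⟨(α₀:ℂ),(α₁:ℂ),Complex.I*(α₂:ℂ),Complex.I*(α₃:ℂ)⟩) * Iq
      = ψL (Complex.I • (Jq * ⟨(α₀:ℂ),(α₁:ℂ),Complex.I*(α₂:ℂ),Complex.I*(α₃:ℂ)⟩)) := by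
  apply QuaternionAlgebra.ext <;>
    simp [ψL, onePiI, Iq, Jq, qhat, Quaternion.re_mul, Quaternion.imI_mul,
      Quaternion.imJ_mul, Quaternion.imK_mul, Complex.ext_iff] <;> ring

lemma fderiv_im_zero (f : ℝ × ℝ → ℂ) (hf : ∀ p, (f p).im = 0) (p d : ℝ × ℝ) :
    (fderiv ℝ f p d).im = 0 := by
  by_cases h : DifferentiableAt ℝ f p
  · have h3 : fderiv ℝ (fun q => (f q).im) p = (Complex.imCLM : ℂ →L[ℝ] ℝ).comp (fderiv ℝ f p) :=
      (Complex.imCLM.hasFDerivAt.comp p h.hasFDerivAt).fderiv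
    have h2 : fderiv ℝ (fun q => (f q).im) p = 0 := by
      have : (fun q => (f q).im) = fun _ => (0:ℝ) := funext hf
      rw [this]; simp
    have := congrFun (congrArg DFunLike.coe (h2.symm.trans h3)) d
    simpa using this.symm
  · rw [fderiv_zero_of_not_differentiableAt h]; simp

lemma fderiv_re_zero (f : ℝ × ℝ → ℂ) (hf : ∀ p, (f p).re = 0) (p d : ℝ × ℝ) :
    (fderiv ℝ f p d).re = 0 := by
  by_cases h : DifferentiableAt ℝ f p
  · have h3 : fderiv ℝ (fun q => (f q).re) p = (Complex.reCLM : ℂ →L[ℝ] ℝ).comp (fderiv ℝ f p) :=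
      (Complex.reCLM.hasFDerivAt.comp p h.hasFDerivAt).fderiv
    have h2 : fderiv ℝ (fun q => (f q).re) p = 0 := by
      have : (fun q => (f q).re) = fun _ => (0:ℝ) := funext hf
      rw [this]; simp
    have := congrFun (congrArg DFunLike.coe (h2.symm.trans h3)) d
    simpa using this.symm
  · rw [fderiv_zero_of_not_differentiableAt h]; simp

lemma qpd_mul_left (c : Quaternion ℂ) {f : ℝ × ℝ → Quaternion ℂ} (hf : QSmooth f)
    (d p : ℝ × ℝ) : qpd d (fun s => c * f s) p = c * qpd d f p := by
  obtain ⟨h0, h1, h2, h3⟩ := hf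
  have H0 := ((h0.differentiable (by norm_num)) p).hasFDerivAt
  have H1 := ((h1.differentiable (by norm_num)) p).hasFDerivAt
  have H2 := ((h2.differentiable (by norm_num)) p).hasFDerivAt
  have H3 := ((h3.differentiable (by norm_num)) p).hasFDerivAt
  apply QuaternionAlgebra.ext
  · have e : (fun s => (c * f s).re) =
        fun s => c.re * (f s).re - c.imI * (f s).imI - c.imJ * (f s).imJ - c.imK * (f s).imK := by
      funext s; simp [Quaternion.re_mul]
    show fderiv ℝ (fun s => (c * f s).re) p d = _
    rw [e, (((H0.const_mul c.re).fun_sub (H1.const_mul c.imI)).fun_sub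
      (H2.const_mul c.imJ)).fun_sub (H3.const_mul c.imK) |>.fderiv]
    simp [qpd, Quaternion.re_mul]
  · have e : (fun s => (c * f s).imI) =
        fun s => c.re * (f s).imI + c.imI * (f s).re + c.imJ * (f s).imK - c.imK * (f s).imJ := by
      funext s; simp [Quaternion.imI_mul] <;> ring
    show fderiv ℝ (fun s => (c * f s).imI) p d = _
    rw [e, (((H1.const_mul c.re).fun_add (H0.const_mul c.imI)).fun_add
      (H3.const_mul c.imJ)).fun_sub (H2.const_mul c.imK) |>.fderiv]
    simp [qpd, Quaternion.imI_mul] <;> ring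
  · have e : (fun s => (c * f s).imJ) =
        fun s => c.re * (f s).imJ - c.imI * (f s).imK + c.imJ * (f s).re + c.imK * (f s).imI := by
      funext s; simp [Quaternion.imJ_mul] <;> ring
    show fderiv ℝ (fun s => (c * f s).imJ) p d = _
    rw [e, (((H2.const_mul c.re).fun_sub (H3.const_mul c.imI)).fun_add
      (H0.const_mul c.imJ)).fun_add (H1.const_mul c.imK) |>.fderiv]
    simp [qpd, Quaternion.imJ_mul] <;> ring
  · have e : (fun s => (c * f s).imK) =
        fun s => c.re * (f s).imK + c.imI * (f s).imJ - c.imJ * (f s).imI + c.imK * (f s).re := by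
      funext s; simp [Quaternion.imK_mul] <;> ring
    show fderiv ℝ (fun s => (c * f s).imK) p d = _
    rw [e, (((H3.const_mul c.re).fun_add (H2.const_mul c.imI)).fun_sub
      (H1.const_mul c.imJ)).fun_add (H0.const_mul c.imK) |>.fderiv]
    simp [qpd, Quaternion.imK_mul] <;> ring

lemma qpd_csmul (a : ℂ) {f : ℝ × ℝ → Quaternion ℂ} (hf : QSmooth f) (d p : ℝ × ℝ) :
    qpd d (fun s => a • f s) p = a • qpd d f p := by
  obtain ⟨h0, h1, h2, h3⟩ := hf
  have H0 := ((h0.differentiable (by norm_num)) p).hasFDerivAt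
  have H1 := ((h1.differentiable (by norm_num)) p).hasFDerivAt
  have H2 := ((h2.differentiable (by norm_num)) p).hasFDerivAt
  have H3 := ((h3.differentiable (by norm_num)) p).hasFDerivAt
  apply QuaternionAlgebra.ext
  · show fderiv ℝ (fun s => (a • f s).re) p d = _
    have e : (fun s => (a • f s).re) = fun s => a * (f s).re := by funext s; simp
    rw [e, (H0.const_mul a).fderiv]; simp [qpd]; rfl
  · show fderiv ℝ (fun s => (a • f s).imI) p d = _
    have e : (fun s => (a • f s).imI) = fun s => a * (f s).imI := by funext s; simp
    rw [e, (H1.const_mul a).fderiv]; simp [qpd]; rfl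
  · show fderiv ℝ (fun s => (a • f s).imJ) p d = _
    have e : (fun s => (a • f s).imJ) = fun s => a * (f s).imJ := by funext s; simp
    rw [e, (H2.const_mul a).fderiv]; simp [qpd]; rfl
  · show fderiv ℝ (fun s => (a • f s).imK) p d = _
    have e : (fun s => (a • f s).imK) = fun s => a * (f s).imK := by funext s; simp
    rw [e, (H3.const_mul a).fderiv]; simp [qpd]; rfl

lemma qsmooth_mul_left (c : Quaternion ℂ) {f : ℝ × ℝ → Quaternion ℂ} (hf : QSmooth f) :
    QSmooth (fun s => c * f s) := by
  obtain ⟨h0, h1, h2, h3⟩ := hf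
  refine ⟨?_, ?_, ?_, ?_⟩ <;>
    simp only [Quaternion.re_mul, Quaternion.imI_mul, Quaternion.imJ_mul, Quaternion.imK_mul] <;>
    fun_prop

lemma qdz_psiL {f : ℝ × ℝ → Quaternion ℂ} (hf : QSmooth f) (p : ℝ × ℝ) :
    qdz (fun s => ψL (f s)) p = ψL (qdz f p) := by
  have hm := qsmooth_mul_left onePiI hf
  have e : ∀ d, qpd d (fun s => ψL (f s)) p = ψL (qpd d f p) := by
    intro d
    show qpd d (fun s => (2:ℂ)⁻¹ • (onePiI * f s)) p = _
    rw [qpd_csmul _ hm, qpd_mul_left _ hf]; rfl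
  rw [qdz, qdz, e, e, comm_psiL Iq _ rfl rfl, ← psiL_sub, ← psiL_csmul]

lemma qdzbar_psiL {f : ℝ × ℝ → Quaternion ℂ} (hf : QSmooth f) (p : ℝ × ℝ) :
    qdzbar (fun s => ψL (f s)) p = ψL (qdzbar f p) := by
  have hm := qsmooth_mul_left onePiI hf
  have e : ∀ d, qpd d (fun s => ψL (f s)) p = ψL (qpd d f p) := by
    intro d
    show qpd d (fun s => (2:ℂ)⁻¹ • (onePiI * f s)) p = _
    rw [qpd_csmul _ hm, qpd_mul_left _ hf]; rfl
  rw [qdzbar, qdzbar, e, e, comm_psiL Iq _ rfl rfl, ← psiL_add, ← psiL_csmul]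

lemma W_qpd {v : ℝ × ℝ → Quaternion ℂ} (hv : ∀ q, v q ∈ Wset) (d p : ℝ × ℝ) :
    qpd d v p ∈ Wset := by
  rw [Wmem_iff]
  exact ⟨fderiv_im_zero _ (fun q => ((Wmem_iff _).1 (hv q)).1) p d,
    fderiv_im_zero _ (fun q => ((Wmem_iff _).1 (hv q)).2.1) p d,
    fderiv_re_zero _ (fun q => ((Wmem_iff _).1 (hv q)).2.2.1) p d,
    fderiv_re_zero _ (fun q => ((Wmem_iff _).1 (hv q)).2.2.2) p d⟩

lemma W_half_sub {A B : Quaternion ℂ} (hA : A ∈ Wset) (hB : B ∈ Wset) :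
    (2:ℂ)⁻¹ • (A - Iq * B) ∈ Wset := by
  rw [Wmem_iff] at *
  obtain ⟨a1,a2,a3,a4⟩ := hA; obtain ⟨b1,b2,b3,b4⟩ := hB
  refine ⟨?_,?_,?_,?_⟩ <;>
    simp [Iq, Quaternion.re_mul, Quaternion.imI_mul, Quaternion.imJ_mul, Quaternion.imK_mul,
      a1,a2,a3,a4,b1,b2,b3,b4]

lemma W_half_add {A B : Quaternion ℂ} (hA : A ∈ Wset) (hB : B ∈ Wset) :
    (2:ℂ)⁻¹ • (A + Iq * B) ∈ Wset := by
  rw [Wmem_iff] at *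
  obtain ⟨a1,a2,a3,a4⟩ := hA; obtain ⟨b1,b2,b3,b4⟩ := hB
  refine ⟨?_,?_,?_,?_⟩ <;>
    simp [Iq, Quaternion.re_mul, Quaternion.imI_mul, Quaternion.imJ_mul, Quaternion.imK_mul,
      a1,a2,a3,a4,b1,b2,b3,b4]

lemma W_qdz {v : ℝ × ℝ → Quaternion ℂ} (hv : ∀ q, v q ∈ Wset) (p : ℝ × ℝ) :
    qdz v p ∈ Wset := W_half_sub (W_qpd hv _ p) (W_qpd hv _ p)

lemma W_qdzbar {v : ℝ × ℝ → Quaternion ℂ} (hv : ∀ q, v q ∈ Wset) (p : ℝ × ℝ) :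
    qdzbar v p ∈ Wset := W_half_add (W_qpd hv _ p) (W_qpd hv _ p)

lemma W_add {w w' : Quaternion ℂ} (hw : w ∈ Wset) (hw' : w' ∈ Wset) : w + w' ∈ Wset := by
  rw [Wmem_iff] at *
  obtain ⟨a1,a2,a3,a4⟩ := hw; obtain ⟨b1,b2,b3,b4⟩ := hw'
  exact ⟨by simp [a1,b1], by simp [a2,b2], by simp [a3,b3], by simp [a4,b4]⟩

lemma W_rsmul (r : ℝ) {w : Quaternion ℂ} (hw : w ∈ Wset) : r • w ∈ Wset := by
  rw [Wmem_iff] at *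
  obtain ⟨a1,a2,a3,a4⟩ := hw
  exact ⟨by simp [a1], by simp [a2], by simp [a3], by simp [a4]⟩

lemma W_mulD {D w : Quaternion ℂ} (h1 : D.re.im = 0) (h2 : D.imI.im = 0)
    (h3 : D.imJ = 0) (h4 : D.imK = 0) (hw : w ∈ Wset) : D * w ∈ Wset := by
  rw [Wmem_iff] at *
  obtain ⟨a1,a2,a3,a4⟩ := hw
  refine ⟨?_,?_,?_,?_⟩ <;>
    simp [Quaternion.re_mul, Quaternion.imI_mul, Quaternion.imJ_mul, Quaternion.imK_mul,
      h1,h2,h3,h4,a1,a2,a3,a4]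

lemma W_term2 (Q : ℂ) {w : Quaternion ℂ} (hw : w ∈ Wset) :
    Complex.I • (cI Q * (Jq * w)) ∈ Wset := by
  rw [Wmem_iff] at *
  obtain ⟨a1,a2,a3,a4⟩ := hw
  refine ⟨?_,?_,?_,?_⟩ <;>
    simp [cI, Jq, Quaternion.re_mul, Quaternion.imI_mul, Quaternion.imJ_mul,
      Quaternion.imK_mul, a1,a2,a3,a4]

lemma W_term2' {w : Quaternion ℂ} (hw : w ∈ Wset) :
    Complex.I • (Jq * w) ∈ Wset := by
  rw [Wmem_iff] at *
  obtain ⟨a1,a2,a3,a4⟩ := hw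
  refine ⟨?_,?_,?_,?_⟩ <;>
    simp [Jq, Quaternion.re_mul, Quaternion.imI_mul, Quaternion.imJ_mul,
      Quaternion.imK_mul, a1,a2,a3,a4]

lemma D_props (h : ℝ × ℝ → ℝ) (p : ℝ × ℝ) :
    (qdz (fun s => rQ (h s)) p).re.im = 0 ∧ (qdz (fun s => rQ (h s)) p).imI.im = 0 ∧
    (qdz (fun s => rQ (h s)) p).imJ = 0 ∧ (qdz (fun s => rQ (h s)) p).imK = 0 := by
  have him : ∀ d, (fderiv ℝ (fun s => ((h s : ℝ) : ℂ)) p d).im = 0 :=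
    fun d => fderiv_im_zero _ (fun q => by simp) p d
  refine ⟨?_, ?_, ?_, ?_⟩ <;>
    simp [qdz, qpd, rQ, Iq, Quaternion.re_mul, Quaternion.imI_mul, Quaternion.imJ_mul,
      Quaternion.imK_mul, him]

lemma transfer1 {w : Quaternion ℂ} (hw : w ∈ Wset) (D : Quaternion ℂ)
    (h3 : D.imJ = 0) (h4 : D.imK = 0) (t : ℝ) (Q : ℂ) :
    D * ψL w + t • (cI Q * (Jq * qhat (ψL w) * Iq))
      = ψL (D * w + t • (Complex.I • (cI Q * (Jq * w)))) := by
  obtain ⟨α₀,α₁,α₂,α₃,rfl⟩ := hw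
  rw [psiL_add, comm_psiL D ⟨(α₀:ℂ),(α₁:ℂ),Complex.I*(α₂:ℂ),Complex.I*(α₃:ℂ)⟩ h3 h4]
  congr 1
  rw [key_identity, comm_psiL (cI Q) _ rfl rfl, mul_csmul_comm, psiL_rsmul, psiL_csmul]

lemma transfer2 {w : Quaternion ℂ} (hw : w ∈ Wset) (t : ℝ) :
    t • (Jq * qhat (ψL w) * Iq) = ψL (t • (Complex.I • (Jq * w))) := by
  obtain ⟨α₀,α₁,α₂,α₃,rfl⟩ := hw
  rw [key_identity, ← psiL_rsmul]

end Aux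

/-- For smooth `τ₀ : ℝ² → (0,∞)` and `Q₀ : ℝ² → ℂ_I`:
(i) `w ↦ (1/2)(1+iI)·w` is an ℝ-linear bijection from `W` onto `L`;
(ii) if `v : ℝ² → W` is smooth and satisfies the `v`-system then `g := (1/2)(1+iI)·v` maps
into `L` and satisfies the `g`-system;
(iii) conversely, if `g : ℝ² → L` is smooth and satisfies the `g`-system, then the unique
(smooth) map `v : ℝ² → W` with `g = (1/2)(1+iI)·v` satisfies the `v`-system. -/
theorem stmt11 (τ₀ : ℝ × ℝ → ℝ) (Q₀ : ℝ × ℝ → ℂ)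
    (hτ : ContDiff ℝ (⊤ : ℕ∞) τ₀) (hτpos : ∀ p, 0 < τ₀ p)
    (hQ : ContDiff ℝ (⊤ : ℕ∞) Q₀) :
    ((∀ w w' : Quaternion ℂ, ψL (w + w') = ψL w + ψL w') ∧
      (∀ (c : ℝ) (w : Quaternion ℂ), ψL (c • w) = c • ψL w) ∧
      Set.BijOn ψL Wset Lset) ∧
    (∀ v : ℝ × ℝ → Quaternion ℂ, QSmooth v → (∀ p, v p ∈ Wset) → VSystem τ₀ Q₀ v →
      (∀ p, ψL (v p) ∈ Lset) ∧ GSystem τ₀ Q₀ (fun p => ψL (v p))) ∧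
    (∀ g : ℝ × ℝ → Quaternion ℂ, QSmooth g → (∀ p, g p ∈ Lset) → GSystem τ₀ Q₀ g →
      ∀ v : ℝ × ℝ → Quaternion ℂ, (∀ p, v p ∈ Wset) → (∀ p, ψL (v p) = g p) →
        QSmooth v ∧ VSystem τ₀ Q₀ v) := by
  refine ⟨⟨psiL_add, psiL_rsmul, fun w hw => psiL_mem_L hw,
    fun w hw w' hw' h => by rw [← chi_psiL hw, h, chi_psiL hw'],
    fun g hg => ⟨χ g, chi_mem_W g, psiL_chi hg⟩⟩, ?_, ?_⟩
  · -- (ii)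
    intro v hv hvW hvS
    refine ⟨fun p => psiL_mem_L (hvW p), fun p => ?_⟩
    obtain ⟨e1, e2⟩ := hvS p
    have hD := D_props (fun s => Real.log (Real.sqrt (τ₀ s))) p
    constructor
    · rw [qdz_psiL hv, e1, transfer1 (hvW p) _ hD.2.2.1 hD.2.2.2]
    · rw [qdzbar_psiL hv, e2, ← transfer2 (hvW p)]
  · -- (iii)
    intro g hg hgL hgS v hvW hψ
    have hveq : ∀ p, v p = χ (g p) := fun p => by rw [← hψ p, chi_psiL (hvW p)]
    obtain ⟨g0, g1, g2, g3⟩ := hg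
    have hv : QSmooth v := by
      refine ⟨?_, ?_, ?_, ?_⟩
      · have e : (fun p => (v p).re) = fun p => ((2*((g p).re).re : ℝ) : ℂ) :=
          funext fun p => by rw [hveq p]; rfl
        rw [e]
        exact Complex.ofRealCLM.contDiff.comp
          (contDiff_const.mul (Complex.reCLM.contDiff.comp g0))
      · have e : (fun p => (v p).imI) = fun p => ((-(2*((g p).re).im) : ℝ) : ℂ) :=
          funext fun p => by rw [hveq p]; rfl
        rw [e]
        exact Complex.ofRealCLM.contDiff.comp
          ((contDiff_const.mul (Complex.imCLM.contDiff.comp g0)).neg)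
      · have e : (fun p => (v p).imJ) = fun p => Complex.I * ((2*((g p).imJ).im : ℝ) : ℂ) :=
          funext fun p => by rw [hveq p]; rfl
        rw [e]
        exact contDiff_const.mul (Complex.ofRealCLM.contDiff.comp
          (contDiff_const.mul (Complex.imCLM.contDiff.comp g2)))
      · have e : (fun p => (v p).imK) = fun p => Complex.I * ((2*((g p).imJ).re : ℝ) : ℂ) :=
          funext fun p => by rw [hveq p]; rfl
        rw [e]
        exact contDiff_const.mul (Complex.ofRealCLM.contDiff.comp
          (contDiff_const.mul (Complex.reCLM.contDiff.comp g2)))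
    refine ⟨hv, fun p => ?_⟩
    have hfun : (fun s => ψL (v s)) = g := funext hψ
    obtain ⟨e1, e2⟩ := hgS p
    have hD := D_props (fun s => Real.log (Real.sqrt (τ₀ s))) p
    constructor
    · have hA := W_qdz hvW p
      have hB : qdz (fun s => rQ (Real.log (Real.sqrt (τ₀ s)))) p * v p +
          (Real.sqrt (τ₀ p))⁻¹ • (Complex.I • (cI (Q₀ p) * (Jq * v p))) ∈ Wset :=
        W_add (W_mulD hD.1 hD.2.1 hD.2.2.1 hD.2.2.2 (hvW p))
          (W_rsmul _ (W_term2 _ (hvW p)))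
      have key : ψL (qdz v p) = ψL (qdz (fun s => rQ (Real.log (Real.sqrt (τ₀ s)))) p * v p +
          (Real.sqrt (τ₀ p))⁻¹ • (Complex.I • (cI (Q₀ p) * (Jq * v p)))) := by
        rw [← qdz_psiL hv p, hfun, e1, ← hψ p, transfer1 (hvW p) _ hD.2.2.1 hD.2.2.2]
      have := congrArg χ key
      rwa [chi_psiL hA, chi_psiL hB] at this
    · have hA := W_qdzbar hvW p
      have hB : (Real.sqrt (τ₀ p) / 4) • (Complex.I • (Jq * v p)) ∈ Wset :=
        W_rsmul _ (W_term2' (hvW p))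
      have key : ψL (qdzbar v p) =
          ψL ((Real.sqrt (τ₀ p) / 4) • (Complex.I • (Jq * v p))) := by
        rw [← qdzbar_psiL hv p, hfun, e2, ← hψ p, ← transfer2 (hvW p)]
      have := congrArg χ key
      rwa [chi_psiL hA, chi_psiL hB] at this
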